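/- arXiv:2212.09680 — 9 statements merged into one kernel-verified Lean document; each statement's English description precedes it below -/
import Mathlib

section
/- Let G(z) = 1 + Re( z · Log((1-z)/(1+z)) ). For every y ∈ (-1, 1), the function s ↦ G(s + iy) (for real s near 0) has derivative 0 at s = 0. (That is, the partial derivative of G in the direction of the real axis vanishes at every point of the imaginary-axis segment {iy : |y| < 1}; this is the homogeneous Neumann condition for G on the diameter of the half-disk.) -/
noncomputable def G (z : ℂ) : ℝ := 1 + (z * Complex.log ((1 - z) / (1 + z))).re

theorem G_neumann_on_diameter (y : ℝ) (hy : y ∈ Set.Ioo (-1 : ℝ) 1) :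
    HasDerivAt (fun s : ℝ => G ((s : ℂ) + (y : ℂ) * Complex.I)) 0 0 := by
  obtain ⟨hy1, hy2⟩ := hy
  set w : ℂ := (y : ℂ) * Complex.I with hw
  have hy2pos : (0 : ℝ) < 1 + y ^ 2 := by positivity
  have hden : (1 : ℂ) + w ≠ 0 := by
    intro h
    have : ((1 : ℂ) + w).re = 0 := by rw [h]; simp
    simp [hw] at this
  have hnum : (1 : ℂ) - w ≠ 0 := by
    intro h
    have : ((1 : ℂ) - w).re = 0 := by rw [h]; simp
    simp [hw] at this
  have hslit : (1 - w) / (1 + w) ∈ Complex.slitPlane := by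
    left
    have : ((1 - w) / (1 + w)).re = (1 - y ^ 2) / (1 + y ^ 2) := by
      simp [Complex.div_re, Complex.normSq_apply, hw]
      ring
    rw [this]
    apply div_pos _ hy2pos
    nlinarith
  -- derivative of z ↦ (1-z)/(1+z)
  have h1 : HasDerivAt (fun z : ℂ => (1 - z) / (1 + z)) (-2 / (1 + w) ^ 2) w := by
    have h := ((hasDerivAt_const w (1 : ℂ)).sub (hasDerivAt_id w)).div
      ((hasDerivAt_const w (1 : ℂ)).add (hasDerivAt_id w)) hden
    simp only [Pi.sub_def, Pi.add_def, Pi.div_def, id] at h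
    refine h.congr_deriv ?_
    rw [div_eq_div_iff (pow_ne_zero 2 hden) (pow_ne_zero 2 hden)]
    ring
  have hlog : HasDerivAt (fun z : ℂ => Complex.log ((1 - z) / (1 + z)))
      (((1 - w) / (1 + w))⁻¹ * (-2 / (1 + w) ^ 2)) w :=
    by have := (Complex.hasDerivAt_log hslit).comp w h1; exact this
  have hf : HasDerivAt (fun z : ℂ => z * Complex.log ((1 - z) / (1 + z)))
      (1 * Complex.log ((1 - w) / (1 + w)) + w * (((1 - w) / (1 + w))⁻¹ * (-2 / (1 + w) ^ 2))) w :=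
    (hasDerivAt_id w).mul hlog
  set c : ℂ := 1 * Complex.log ((1 - w) / (1 + w)) + w * (((1 - w) / (1 + w))⁻¹ * (-2 / (1 + w) ^ 2)) with hc
  -- the real part of the derivative vanishes
  have hlogre : (Complex.log ((1 - w) / (1 + w))).re = 0 := by
    rw [Complex.log_re]
    have habs : ‖(1 - w) / (1 + w)‖ = 1 := by
      rw [norm_div, div_eq_one_iff_eq (by simpa using hden)]
      rw [Complex.norm_def, Complex.norm_def]
      congr 1
      simp [Complex.normSq_apply, hw]
    rw [habs, Real.log_one]
  have ht : w * (((1 - w) / (1 + w))⁻¹ * (-2 / (1 + w) ^ 2)) = -2 * w / ((1 - w) * (1 + w)) := by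
    field_simp
  have hw2 : (1 - w) * (1 + w) = ((1 + y ^ 2 : ℝ) : ℂ) := by
    push_cast
    rw [hw]
    ring_nf
    rw [Complex.I_sq]
    ring
  have hcre : c.re = 0 := by
    rw [hc, Complex.add_re, ht, hw2, one_mul, hlogre]
    rw [Complex.div_ofReal_re]
    simp [hw]
  -- compose down to the real line
  have hinner : HasDerivAt (fun z : ℂ => z + w) 1 (0 : ℂ) := by
    simpa using (hasDerivAt_id (0 : ℂ)).add_const w
  have hf' : HasDerivAt (fun z : ℂ => z * Complex.log ((1 - z) / (1 + z))) c ((0 : ℂ) + w) := by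
    rw [zero_add]; exact hf
  have hcomp : HasDerivAt (fun z : ℂ => (z + w) * Complex.log ((1 - (z + w)) / (1 + (z + w))))
      (c * 1) (0 : ℂ) := by have := hf'.comp 0 hinner; exact this
  have hR : HasDerivAt (fun s : ℝ => ((s : ℂ) + w) * Complex.log ((1 - ((s : ℂ) + w)) / (1 + ((s : ℂ) + w))))
      (c * 1) (0 : ℝ) := hcomp.comp_ofReal
  have hRre : HasDerivAt
      (fun s : ℝ => (((s : ℂ) + w) * Complex.log ((1 - ((s : ℂ) + w)) / (1 + ((s : ℂ) + w)))).re)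
      ((c * 1).re) (0 : ℝ) := Complex.reCLM.hasFDerivAt.comp_hasDerivAt 0 hR
  have hfinal := (hasDerivAt_const (0 : ℝ) (1 : ℝ)).add hRre
  simp only [Pi.add_def] at hfinal
  simp only [G]
  refine hfinal.congr_deriv ?_; simp [hcre]
end

section
/- Let G(z) = 1 + Re( z · Log((1-z)/(1+z)) ). For every z ∈ ℂ with |z| = 1 and z ≠ ±1, the function t ↦ G(t·z) (for real t near 1) has derivative equal to G(z) at t = 1. (That is, the outward radial derivative of G on the unit circle away from ±1 equals G itself: ∂_η G = G, so G satisfies the Robin boundary condition −∂_η G + G = 0.) -/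
theorem G_robin_condition (z : ℂ) (hz : ‖z‖ = 1) (h1 : z ≠ 1) (h2 : z ≠ -1) :
    HasDerivAt (fun t : ℝ => G ((t : ℂ) * z)) (G z) 1 := by
  have hzc : z * (starRingEnd ℂ) z = 1 := by
    rw [Complex.mul_conj]
    norm_cast
    rw [Complex.normSq_eq_norm_sq, hz]; norm_num
  have hz0 : z ≠ 0 := by
    intro h; rw [h] at hz; simp at hz
  have hconj : (starRingEnd ℂ) z = z⁻¹ := eq_inv_of_mul_eq_one_left (by rw [mul_comm]; exact hzc)
  have him : z.im ≠ 0 := by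
    intro h
    have hsq : z.re ^ 2 = 1 := by
      have := Complex.normSq_eq_norm_sq z
      rw [hz] at this
      simp [Complex.normSq_apply, h] at this
      nlinarith
    have : (z.re - 1) * (z.re + 1) = 0 := by nlinarith
    rcases mul_eq_zero.mp this with h' | h'
    · exact h1 (Complex.ext (by simp [Complex.one_re]; linarith) (by simp [Complex.one_im, h]))
    · exact h2 (Complex.ext (by simp; linarith) (by simp [h]))
  have hm : (1 : ℂ) - z ≠ 0 := by
    intro h; exact h1 (by linear_combination -h)
  have hp : (1 : ℂ) + z ≠ 0 := by
    intro h; exact h2 (by linear_combination h)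
  set w : ℂ := (1 - z) / (1 + z) with hw
  have hwim : w.im ≠ 0 := by
    rw [hw, Complex.div_im]
    simp only [Complex.sub_im, Complex.one_im, Complex.sub_re, Complex.one_re,
      Complex.add_re, Complex.add_im]
    intro h
    apply him
    have hNp : Complex.normSq (1 + z) ≠ 0 := by
      simpa [Complex.normSq_eq_zero] using hp
    field_simp at h
    nlinarith [h, Complex.normSq_pos.mpr hp]
  have hslit : w ∈ Complex.slitPlane := Or.inr hwim
  have hN : HasDerivAt (fun u : ℂ => 1 - u * z) (-z) 1 := by
    simpa using ((hasDerivAt_id (1 : ℂ)).mul_const z).const_sub 1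
  have hD : HasDerivAt (fun u : ℂ => 1 + u * z) z 1 := by
    simpa using ((hasDerivAt_id (1 : ℂ)).mul_const z).const_add 1
  have hD1 : (1 : ℂ) + 1 * z ≠ 0 := by simpa using hp
  have hdiv : HasDerivAt (fun u : ℂ => (1 - u * z) / (1 + u * z))
      ((-z * (1 + 1 * z) - (1 - 1 * z) * z) / (1 + 1 * z) ^ 2) 1 := hN.div hD hD1
  have hpt : (1 - (1:ℂ) * z) / (1 + (1:ℂ) * z) = w := by rw [hw]; ring_nf
  have hlogw : HasDerivAt Complex.log w⁻¹ ((1 - (1:ℂ) * z) / (1 + (1:ℂ) * z)) := by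
    rw [hpt]; exact Complex.hasDerivAt_log hslit
  have hlog : HasDerivAt (fun u : ℂ => Complex.log ((1 - u * z) / (1 + u * z)))
      (w⁻¹ * ((-z * (1 + 1 * z) - (1 - 1 * z) * z) / (1 + 1 * z) ^ 2)) 1 :=
    by have := hlogw.comp 1 hdiv; exact this
  have hid : HasDerivAt (fun u : ℂ => u * z) z 1 := by
    simpa using (hasDerivAt_id (1 : ℂ)).mul_const z
  have hF : HasDerivAt (fun u : ℂ => u * z * Complex.log ((1 - u * z) / (1 + u * z)))
      (z * Complex.log w +
        (1 * z) * (w⁻¹ * ((-z * (1 + 1 * z) - (1 - 1 * z) * z) / (1 + 1 * z) ^ 2))) 1 := by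
    have := hid.mul hlog
    simpa [hpt, ← hw, Pi.mul_def] using this
  have hFr : HasDerivAt
      (fun t : ℝ => ((t : ℂ) * z * Complex.log ((1 - (t:ℂ) * z) / (1 + (t:ℂ) * z))))
      (z * Complex.log w +
        (1 * z) * (w⁻¹ * ((-z * (1 + 1 * z) - (1 - 1 * z) * z) / (1 + 1 * z) ^ 2))) 1 :=
    hF.comp_ofReal
  have hre : HasDerivAt (fun t : ℝ =>
        1 + ((t : ℂ) * z * Complex.log ((1 - (t:ℂ) * z) / (1 + (t:ℂ) * z))).re)
      ((z * Complex.log w +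
        (1 * z) * (w⁻¹ * ((-z * (1 + 1 * z) - (1 - 1 * z) * z) / (1 + 1 * z) ^ 2))).re) 1 :=
    (Complex.reCLM.hasFDerivAt.comp_hasDerivAt 1 hFr).const_add 1
  have key : ((z * Complex.log w +
        (1 * z) * (w⁻¹ * ((-z * (1 + 1 * z) - (1 - 1 * z) * z) / (1 + 1 * z) ^ 2))).re) = G z := by
    have hu : (1 * z) * (w⁻¹ * ((-z * (1 + 1 * z) - (1 - 1 * z) * z) / (1 + 1 * z) ^ 2))
        = -2 * z ^ 2 / ((1 - z) * (1 + z)) := by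
      rw [hw]
      field_simp
      ring
    set u : ℂ := -2 * z ^ 2 / ((1 - z) * (1 + z)) with hu'
    have hm' : (1 : ℂ) - z⁻¹ ≠ 0 := by
      intro h
      apply hm
      have : z - 1 = 0 := by
        field_simp at h
        linear_combination h
      linear_combination -this
    have hp' : (1 : ℂ) + z⁻¹ ≠ 0 := by
      intro h
      apply hp
      have : z + 1 = 0 := by
        field_simp at h
        linear_combination h
      linear_combination this
    have hcu : u + (starRingEnd ℂ) u = 2 := by
      rw [hu', map_div₀, map_mul, map_mul, map_sub, map_add, map_one, map_pow, map_neg,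
        map_ofNat, hconj]
      have hq : (-z ^ 2 + z ^ 4 : ℂ) ≠ 0 := by
        have hfac : (-z ^ 2 + z ^ 4 : ℂ) = z ^ 2 * (z - 1) * (z + 1) := by ring
        rw [hfac]
        exact mul_ne_zero (mul_ne_zero (pow_ne_zero 2 hz0) (sub_ne_zero.mpr h1))
          (by intro h; exact h2 (by linear_combination h))
      field_simp [hq]
      have e : (1 + z)⁻¹ * (1 + z) = 1 := inv_mul_cancel₀ hp
      linear_combination (z - 1) * e
    have hure : u.re = 1 := by
      have hadd := Complex.add_conj u
      rw [hadd] at hcu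
      have h1' : (u.re : ℂ) = 1 := by
        have h2' : (2 : ℂ) ≠ 0 := two_ne_zero
        field_simp at hcu
        have h3 : 2 * u.re = 2 := by exact_mod_cast hcu
        exact_mod_cast (show u.re = 1 by linarith)
      exact_mod_cast h1'
    rw [hu, Complex.add_re, hure, G]
    ring
  have hfun : (fun t : ℝ => G ((t:ℂ) * z)) = fun t : ℝ =>
      1 + ((t : ℂ) * z * Complex.log ((1 - (t:ℂ) * z) / (1 + (t:ℂ) * z))).re := by
    funext t; rfl
  rw [hfun, ← key]
  exact hre
end

section
/- Let G(z) = 1 + Re( z · Log((1-z)/(1+z)) ). There exists a constant C > 0 such that for every z ∈ ℂ with |z| ≤ 1 and 0 < |z-1| ≤ 1/2 one has |G(z) − log(|z-1|/2) − 1| ≤ C · |z-1| · (1 + |log |z-1||). -/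
lemma abs_log_le_two_mul (x : ℝ) (hx : 1/2 ≤ x) : |Real.log x| ≤ 2 * |x - 1| := by
  have hx0 : 0 < x := by linarith
  rcases le_or_gt 1 x with h | h
  · have h1 : Real.log x ≤ x - 1 := Real.log_le_sub_one_of_pos hx0
    have h2 : 0 ≤ Real.log x := Real.log_nonneg h
    rw [abs_of_nonneg h2, abs_of_nonneg (by linarith)]
    linarith
  · have h1 : Real.log x⁻¹ ≤ x⁻¹ - 1 := Real.log_le_sub_one_of_pos (by positivity)
    rw [Real.log_inv] at h1
    have h2 : Real.log x ≤ 0 := Real.log_nonpos (le_of_lt hx0) (le_of_lt h)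
    rw [abs_of_nonpos h2, abs_of_nonpos (by linarith)]
    have h3 : x⁻¹ - 1 = (1 - x) / x := by field_simp
    have h4 : (1 - x) / x ≤ 2 * (1 - x) := by
      rw [div_le_iff₀ hx0]
      nlinarith
    linarith
theorem G_log_expansion :
    ∃ C : ℝ, 0 < C ∧ ∀ z : ℂ, ‖z‖ ≤ 1 → 0 < ‖z - 1‖ →
      ‖z - 1‖ ≤ 1 / 2 →
      |G z - Real.log (‖z - 1‖ / 2) - 1| ≤
        C * ‖z - 1‖ * (1 + |Real.log (‖z - 1‖)|) := by
  refine ⟨6, by norm_num, ?_⟩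
  intro z hz ha0 ha
  set a := ‖z - 1‖ with ha_def
  set b := ‖1 + z‖ with hb_def
  have h2ab : (2:ℝ) ≤ b + a := by
    have : (2:ℂ) = (1 + z) + (1 - z) := by ring
    calc (2:ℝ) = ‖(2:ℂ)‖ := by simp
    _ = ‖(1 + z) + (1 - z)‖ := by rw [← this]
    _ ≤ ‖1 + z‖ + ‖1 - z‖ := norm_add_le _ _
    _ = b + a := by rw [hb_def, ha_def, norm_sub_rev (1:ℂ) z]
  have hb_lb : (3:ℝ)/2 ≤ b := by linarith
  have hb_ub : b ≤ 2 := by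
    calc b ≤ ‖(1:ℂ)‖ + ‖z‖ := norm_add_le _ _
    _ ≤ 2 := by simp; linarith
  have hbne : (1 : ℂ) + z ≠ 0 := by
    intro h
    rw [hb_def, h] at hb_lb
    simp at hb_lb
    linarith
  have hane : (1 : ℂ) - z ≠ 0 := by
    intro h
    have h2 : z - 1 = 0 := by linear_combination -h
    rw [ha_def, h2, norm_zero] at ha0
    exact lt_irrefl 0 ha0
  set L := Complex.log ((1 - z) / (1 + z)) with hL_def
  have haζ : ‖(1 - z) / (1 + z)‖ = a / b := by
    rw [norm_div, ha_def, hb_def, norm_sub_rev (1:ℂ) z]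
  have hLre : L.re = Real.log a - Real.log b := by
    rw [hL_def, Complex.log_re, haζ, Real.log_div (ne_of_gt ha0) (by positivity)]
  have hlogb0 : 0 ≤ Real.log b := Real.log_nonneg (by linarith)
  have hlogb1 : Real.log b ≤ 1 := by
    have := Real.log_le_sub_one_of_pos (show (0:ℝ) < b by linarith)
    linarith
  -- error decomposition
  have hsplit : G z - Real.log (a / 2) - 1
      = (Real.log 2 - Real.log b) + ((z - 1) * L).re := by
    have hz1 : z * L = L + (z - 1) * L := by ring
    have : (z * L).re = L.re + ((z - 1) * L).re := by rw [hz1, Complex.add_re]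
    rw [G, ← hL_def, this, hLre, Real.log_div (ne_of_gt ha0) (by norm_num)]
    ring
  -- bound |log 2 - log b|
  have h1 : |Real.log 2 - Real.log b| ≤ a := by
    have hbb : Real.log 2 - Real.log b = -Real.log (b / 2) := by
      rw [Real.log_div (by positivity) (by norm_num)]; ring
    rw [hbb, abs_neg]
    have := abs_log_le_two_mul (b / 2) (by linarith)
    have h2 : |b / 2 - 1| ≤ a / 2 := by
      rw [abs_le]; constructor <;> [linarith; linarith]
    linarith
  -- bound |((z-1)*L).re|
  have hLabs : ‖L‖ ≤ |Real.log a| + 1 + Real.pi := by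
    have h3 : ‖L‖ ≤ |L.re| + |L.im| := Complex.norm_le_abs_re_add_abs_im L
    have h4 : |L.im| ≤ Real.pi := by
      rw [hL_def, Complex.log_im]
      exact Complex.abs_arg_le_pi _
    have h5 : |L.re| ≤ |Real.log a| + 1 := by
      rw [hLre]
      calc |Real.log a - Real.log b| ≤ |Real.log a| + |Real.log b| := abs_sub _ _
      _ ≤ |Real.log a| + 1 := by rw [abs_of_nonneg hlogb0]; linarith
    linarith
  have h2 : |((z - 1) * L).re| ≤ a * (|Real.log a| + 1 + Real.pi) := by
    calc |((z - 1) * L).re| ≤ ‖(z - 1) * L‖ := Complex.abs_re_le_norm _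
    _ = a * ‖L‖ := by rw [norm_mul]
    _ ≤ a * (|Real.log a| + 1 + Real.pi) := by
        apply mul_le_mul_of_nonneg_left hLabs (le_of_lt ha0)
  rw [hsplit]
  have hpi : Real.pi ≤ 4 := by linarith [Real.pi_le_four]
  have hla : 0 ≤ |Real.log a| := abs_nonneg _
  calc |Real.log 2 - Real.log b + ((z - 1) * L).re|
      ≤ |Real.log 2 - Real.log b| + |((z - 1) * L).re| := abs_add_le _ _
    _ ≤ a + a * (|Real.log a| + 1 + Real.pi) := by linarith
    _ ≤ 6 * a * (1 + |Real.log a|) := by nlinarith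
end

section
/- Let u be a real-valued function that is harmonic on an open subset U of the plane ℝ² ≅ ℂ containing the closed unit disk. Suppose that for every z with |z| = 1 the radial derivative of u at z equals u(z), i.e., (Du)(z)[z] = u(z) where (Du)(z) denotes the (Fréchet) derivative of u at z. Then there exist real numbers a, b such that u(x, y) = a·x + b·y for every (x, y) in the closed unit disk. -/
open Metric Filter Set Complex

set_option maxHeartbeats 2000000 in
theorem kernel_of_free_boundary_jacobi_on_disk
    (U : Set ℂ) (hU : IsOpen U) (hball : Metric.closedBall (0 : ℂ) 1 ⊆ U)
    (u : ℂ → ℝ)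
    (hreg : ContDiffOn ℝ 2 u U)
    (hharm : ∀ z ∈ U,
      fderiv ℝ (fun w : ℂ => fderiv ℝ u w 1) z 1
        + fderiv ℝ (fun w : ℂ => fderiv ℝ u w Complex.I) z Complex.I = 0)
    (hbdry : ∀ z : ℂ, ‖z‖ = 1 → fderiv ℝ u z z = u z) :
    ∃ a b : ℝ, ∀ z : ℂ, ‖z‖ ≤ 1 → u z = a * z.re + b * z.im := by
  classical
  -- a slightly larger closed ball inside U
  obtain ⟨δ, hδ, hthick⟩ :=
    (isCompact_closedBall (0:ℂ) 1).exists_thickening_subset_open hU hball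
  set R : ℝ := 1 + δ/2 with hRdef
  have hR1 : 1 < R := by simp only [hRdef]; linarith
  have hRU : Metric.closedBall (0:ℂ) R ⊆ U := by
    refine subset_trans ?_ hthick
    rw [thickening_closedBall hδ zero_le_one]
    exact Metric.closedBall_subset_ball (by simp only [hRdef]; linarith)
  set r₂ : ℝ := 1 + δ/4 with hr₂def
  have hr₂1 : 1 < r₂ := by simp only [hr₂def]; linarith
  have hr₂R : r₂ < R := by simp only [hr₂def, hRdef]; linarith
  have hballU : Metric.ball (0:ℂ) r₂ ⊆ U :=
    (Metric.ball_subset_closedBall.trans (Metric.closedBall_subset_closedBall hr₂R.le)).trans hRU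
  -- the partial derivatives and the holomorphic gradient
  set u₁ : ℂ → ℝ := fun w => fderiv ℝ u w 1 with hu₁def
  set u₂ : ℂ → ℝ := fun w => fderiv ℝ u w Complex.I with hu₂def
  set f : ℂ → ℂ := fun w => (u₁ w : ℂ) - (u₂ w : ℂ) * Complex.I with hfdef
  set dd : ℂ → ℂ := fun z => ((fderiv ℝ (fderiv ℝ u) z 1 1 : ℝ) : ℂ)
      - ((fderiv ℝ (fderiv ℝ u) z 1 Complex.I : ℝ) : ℂ) * Complex.I with hdddef
  have hdfd : ∀ z ∈ U, DifferentiableAt ℝ (fderiv ℝ u) z := fun z hz =>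
    ((hreg.contDiffAt (hU.mem_nhds hz)).fderiv_right (m := 1)
      (by norm_num)).differentiableAt one_ne_zero
  have hu₁' : ∀ z ∈ U, HasFDerivAt u₁
      ((ContinuousLinearMap.apply ℝ ℝ (1:ℂ)).comp (fderiv ℝ (fderiv ℝ u) z)) z := fun z hz =>
    (ContinuousLinearMap.apply ℝ ℝ (1:ℂ)).hasFDerivAt.comp z (hdfd z hz).hasFDerivAt
  have hu₂' : ∀ z ∈ U, HasFDerivAt u₂
      ((ContinuousLinearMap.apply ℝ ℝ (Complex.I)).comp (fderiv ℝ (fderiv ℝ u) z)) z := fun z hz =>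
    (ContinuousLinearMap.apply ℝ ℝ (Complex.I)).hasFDerivAt.comp z (hdfd z hz).hasFDerivAt
  -- f is complex differentiable with derivative dd
  have hfD : ∀ z ∈ U, HasDerivAt f (dd z) z := by
    intro z hz
    have hsym := (hreg.contDiffAt (hU.mem_nhds hz)).isSymmSndFDerivAt (by simp [minSmoothness_of_isRCLikeNormedField])
    set H := fderiv ℝ (fderiv ℝ u) z with hHdef
    have harm : H 1 1 + H Complex.I Complex.I = 0 := by
      have h := hharm z hz
      rw [(hu₁' z hz).fderiv, (hu₂' z hz).fderiv] at h
      simpa using h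
    have hsy : H Complex.I 1 = H 1 Complex.I := hsym Complex.I 1
    have h3 : HasFDerivAt f
        (Complex.ofRealCLM.comp ((ContinuousLinearMap.apply ℝ ℝ (1:ℂ)).comp H)
          - Complex.I • (Complex.ofRealCLM.comp ((ContinuousLinearMap.apply ℝ ℝ (Complex.I)).comp H))) z :=
      (Complex.ofRealCLM.hasFDerivAt.comp z (hu₁' z hz)).sub
        ((Complex.ofRealCLM.hasFDerivAt.comp z (hu₂' z hz)).mul_const Complex.I)
    rw [hasDerivAt_iff_hasFDerivAt]
    refine hasFDerivAt_of_restrictScalars ℝ h3 ?_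
    apply ContinuousLinearMap.ext
    intro v
    have hv : v = v.re • (1:ℂ) + v.im • Complex.I := by
      have := (Complex.re_add_im v).symm
      simpa [Complex.real_smul] using this
    have hv1 : H v 1 = v.re * H 1 1 + v.im * H 1 Complex.I := by
      conv_lhs => rw [hv]
      rw [map_add, map_smul, map_smul, ContinuousLinearMap.add_apply,
        ContinuousLinearMap.smul_apply, ContinuousLinearMap.smul_apply, smul_eq_mul,
        smul_eq_mul, hsy]
    have hv2 : H v Complex.I = v.re * H 1 Complex.I - v.im * H 1 1 := by
      have hII : H Complex.I Complex.I = - H 1 1 := by linarith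
      conv_lhs => rw [hv]
      rw [map_add, map_smul, map_smul, ContinuousLinearMap.add_apply,
        ContinuousLinearMap.smul_apply, ContinuousLinearMap.smul_apply, smul_eq_mul,
        smul_eq_mul, hII]
      ring
    simp only [ContinuousLinearMap.coe_restrictScalars', ContinuousLinearMap.coe_sub',
      Pi.sub_apply, ContinuousLinearMap.coe_comp', Function.comp_apply,
      ContinuousLinearMap.coe_smul', Pi.smul_apply,
      ContinuousLinearMap.smulRight_apply, ContinuousLinearMap.one_apply,
      ContinuousLinearMap.apply_apply, Complex.ofRealCLM_apply, ContinuousLinearMap.toSpanSingleton_apply]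
    rw [hv1, hv2]
    simp only [hdddef, smul_eq_mul]
    simp only [Complex.ext_iff, Complex.mul_re, Complex.mul_im, Complex.add_re, Complex.add_im,
      Complex.sub_re, Complex.sub_im, Complex.ofReal_re, Complex.ofReal_im, Complex.I_re,
      Complex.I_im, Complex.mul_re, Complex.mul_im]
    constructor <;> ring
  have hfdiffU : DifferentiableOn ℂ f U := fun z hz =>
    ((hfD z hz).differentiableAt).differentiableWithinAt
  -- representation of the real derivative of u via f
  have hudiff : DifferentiableOn ℝ u U := hreg.differentiableOn two_ne_zero
  have hrepr : ∀ z ∈ U, ∀ v : ℂ, fderiv ℝ u z v = (f z * v).re := by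
    intro z hz v
    have hd : DifferentiableAt ℝ u z := (hudiff z hz).differentiableAt (hU.mem_nhds hz)
    have hv : v = v.re • (1:ℂ) + v.im • Complex.I := by
      have := (Complex.re_add_im v).symm
      simpa [Complex.real_smul] using this
    conv_lhs => rw [hv]
    rw [map_add, map_smul, map_smul]
    simp only [hfdef, smul_eq_mul]
    simp [Complex.mul_re, hu₁def, hu₂def]
    ring
  -- power series of f on a ball of radius R
  set Rn : NNReal := Real.toNNReal R with hRndef
  have hRnR : (Rn : ℝ) = R := Real.coe_toNNReal _ (by positivity)
  have hfdR : DifferentiableOn ℂ f (Metric.closedBall 0 (Rn:ℝ)) :=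
    hfdiffU.mono (by rw [hRnR]; exact hRU)
  have hRnpos : 0 < Rn := Real.toNNReal_pos.2 (by positivity)
  have hp : HasFPowerSeriesOnBall f (cauchyPowerSeries f 0 Rn) 0 Rn :=
    hfdR.hasFPowerSeriesOnBall hRnpos
  set p := cauchyPowerSeries f 0 Rn with hpdef
  have hsumf : ∀ z ∈ Metric.ball (0:ℂ) (Rn:ℝ), HasSum (fun n => p.coeff n * z^n) (f z) := by
    intro z hz
    have hz' : z ∈ eball (0:ℂ) Rn := by
      rw [mem_emetric_ball_zero_iff]
      exact_mod_cast (by simpa [mem_ball_zero_iff] using hz : ‖z‖ < (Rn:ℝ))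
    have h := hp.hasSum hz'
    simp only [zero_add, FormalMultilinearSeries.apply_eq_pow_smul_coeff, smul_eq_mul] at h
    simpa [mul_comm] using h
  -- coefficient bounds
  set rm : ℝ := 1 + δ/3 with hrmdef
  have hrm0 : 0 < rm := by simp only [hrmdef]; linarith
  have hr₂rm : r₂ < rm := by simp only [hrmdef, hr₂def]; linarith
  have hrmR : rm < R := by simp only [hrmdef, hRdef]; linarith
  have hrmlt : ((Real.toNNReal rm : NNReal) : ENNReal) < p.radius := by
    refine lt_of_lt_of_le ?_ hp.r_le
    rw [ENNReal.coe_lt_coe, ← NNReal.coe_lt_coe, Real.coe_toNNReal _ hrm0.le, hRnR]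
    exact hrmR
  obtain ⟨C, hC0, hCb⟩ := p.norm_mul_pow_le_of_lt_radius hrmlt
  set q : ℝ := r₂ / rm with hqdef
  have hq0 : 0 ≤ q := by positivity
  have hq1 : q < 1 := (div_lt_one hrm0).2 hr₂rm
  have hcoeff : ∀ n, ‖p.coeff n‖ ≤ ‖p n‖ := by
    intro n
    have h := (p n).le_opNorm (1 : Fin n → ℂ)
    simp only [Pi.one_apply, norm_one, Finset.prod_const_one, mul_one] at h
    exact h
  have hterm : ∀ n, ∀ z ∈ Metric.ball (0:ℂ) r₂, ‖p.coeff n * z^n‖ ≤ C * q^n := by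
    intro n z hz
    have hzn : ‖z‖ ≤ r₂ := (mem_ball_zero_iff.1 hz).le
    have h1 : ‖p.coeff n * z^n‖ ≤ ‖p n‖ * r₂^n := by
      rw [norm_mul, norm_pow]
      exact mul_le_mul (hcoeff n) (pow_le_pow_left₀ (norm_nonneg z) hzn n)
        (by positivity) (norm_nonneg _)
    have h2 : ‖p n‖ * r₂^n = (‖p n‖ * rm^n) * q^n := by
      have hrmn : rm^n * q^n = r₂^n := by
        rw [hqdef, div_pow, mul_div_cancel₀ _ (by positivity : rm^n ≠ 0)]
      rw [mul_assoc, hrmn]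
    have h3 : (‖p n‖ * rm^n) * q^n ≤ C * q^n := by
      refine mul_le_mul_of_nonneg_right ?_ (by positivity)
      have := hCb n
      rwa [Real.coe_toNNReal _ hrm0.le] at this
    linarith [h1, h2.le, h3]
  have hsm : Summable (fun n : ℕ => C * q^n) :=
    (summable_geometric_of_lt_one hq0 hq1).mul_left C
  -- the primitive F of f
  set F : ℂ → ℂ := fun z => ∑' n : ℕ, (p.coeff n / (n+1)) * z^(n+1) with hFdef
  have hballRn : Metric.ball (0:ℂ) r₂ ⊆ Metric.ball (0:ℂ) (Rn:ℝ) :=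
    Metric.ball_subset_ball (by rw [hRnR]; exact hr₂R.le)
  have hF : ∀ z ∈ Metric.ball (0:ℂ) r₂, HasDerivAt F (f z) z := by
    intro z hz
    have h := hasDerivAt_tsum_of_isPreconnected hsm Metric.isOpen_ball
      (convex_ball (0:ℂ) r₂).isPreconnected
      (g := fun n w => (p.coeff n / (n+1)) * w^(n+1)) (g' := fun n w => p.coeff n * w^n)
      (y₀ := 0) (y := z) ?_ ?_ (mem_ball_self (by linarith)) ?_ hz
    · rwa [(hsumf z (hballRn hz)).tsum_eq] at h
    · intro n w _
      have hne : ((n:ℂ)+1) ≠ 0 := Nat.cast_add_one_ne_zero n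
      have h := (hasDerivAt_pow (n+1) w).const_mul (p.coeff n / ((n:ℂ)+1))
      simp only [Nat.add_sub_cancel, Nat.cast_add, Nat.cast_one] at h
      have he : p.coeff n / ((n:ℂ)+1) * (((n:ℂ)+1) * w^n) = p.coeff n * w^n := by
        field_simp
      rwa [he] at h
    · intro n w hw
      exact hterm n w hw
    · have hz : (fun n : ℕ => (p.coeff n / ((n:ℕ)+1)) * (0:ℂ)^(n+1)) = fun _ => (0:ℂ) := by
        funext n
        simp [zero_pow (Nat.succ_ne_zero n)]
      rw [hz]
      exact summable_zero
  have hF0 : F 0 = 0 := by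
    simp only [hFdef]
    have hz : ∀ n : ℕ, (p.coeff n / ((n:ℕ)+1)) * (0:ℂ)^(n+1) = 0 := fun n => by
      simp [zero_pow (Nat.succ_ne_zero n)]
    calc (∑' n : ℕ, (p.coeff n / ((n:ℕ)+1)) * (0:ℂ)^(n+1)) = ∑' _ : ℕ, (0:ℂ) :=
          tsum_congr hz
      _ = 0 := tsum_zero
  -- u = u 0 + Re (F z) on ball r₂
  have hmid : ∀ z ∈ Metric.ball (0:ℂ) r₂, u z = u 0 + (F z).re := by
    have hFdiffR : DifferentiableOn ℝ F (Metric.ball (0:ℂ) r₂) := fun w hw =>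
      ((hF w hw).differentiableAt.restrictScalars ℝ).differentiableWithinAt
    have hφdiff : DifferentiableOn ℝ (fun w => u w - (F w).re) (Metric.ball (0:ℂ) r₂) :=
      (hudiff.mono hballU).sub (Complex.reCLM.differentiable.comp_differentiableOn hFdiffR)
    have hzero : ∀ w ∈ Metric.ball (0:ℂ) r₂,
        fderivWithin ℝ (fun w => u w - (F w).re) (Metric.ball (0:ℂ) r₂) w = 0 := by
      intro w hw
      have hdu : HasFDerivAt u (fderiv ℝ u w) w :=
        ((hudiff w (hballU hw)).differentiableAt (hU.mem_nhds (hballU hw))).hasFDerivAt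
      have hdF : HasFDerivAt (fun w => (F w).re)
          (Complex.reCLM.comp ((ContinuousLinearMap.smulRight (1:ℂ →L[ℂ] ℂ) (f w)).restrictScalars ℝ)) w :=
        Complex.reCLM.hasFDerivAt.comp w ((hF w hw).hasFDerivAt.restrictScalars ℝ)
      have heq : fderiv ℝ u w = Complex.reCLM.comp
          ((ContinuousLinearMap.smulRight (1:ℂ →L[ℂ] ℂ) (f w)).restrictScalars ℝ) := by
        apply ContinuousLinearMap.ext
        intro v
        rw [hrepr w (hballU hw) v]
        simp [ContinuousLinearMap.smulRight_apply, smul_eq_mul, mul_comm]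
      rw [fderivWithin_of_isOpen Metric.isOpen_ball hw, (show HasFDerivAt (fun w => u w - (F w).re) _ w from hdu.sub hdF).fderiv, heq, sub_self]
    intro z hz
    have h0 : (0:ℂ) ∈ Metric.ball (0:ℂ) r₂ := mem_ball_self (by linarith)
    have hc := (convex_ball (0:ℂ) r₂).is_const_of_fderivWithin_eq_zero hφdiff hzero hz h0
    rw [hF0] at hc
    simp only [Complex.zero_re, sub_zero] at hc
    linarith [hc]
  -- the holomorphic function g
  set g : ℂ → ℂ := fun z => z * f z - F z - ((u 0 : ℝ) : ℂ) with hgdef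
  have hball1r₂ : Metric.ball (0:ℂ) 1 ⊆ Metric.ball (0:ℂ) r₂ :=
    Metric.ball_subset_ball (by linarith)
  have hgd : DifferentiableOn ℂ g (Metric.ball (0:ℂ) r₂) := fun w hw =>
    (((differentiableAt_id.mul (hfD w (hballU hw)).differentiableAt).sub
      (hF w hw).differentiableAt).sub (differentiableAt_const _)).differentiableWithinAt
  have hgre_bdry : ∀ w : ℂ, ‖w‖ = 1 → (g w).re = 0 := by
    intro w hw
    have hwU : w ∈ U := hball (mem_closedBall_zero_iff.2 (by rw [hw]))
    have hwb : w ∈ Metric.ball (0:ℂ) r₂ :=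
      mem_ball_zero_iff.2 (by rw [hw]; linarith)
    have h1 : (w * f w).re = u w := by
      rw [mul_comm, ← hrepr w hwU w]
      exact hbdry w hw
    have h2 : (F w).re = u w - u 0 := by
      have := hmid w hwb; linarith
    simp only [hgdef, Complex.sub_re, Complex.ofReal_re, h1, h2]
    ring
  -- maximum principle: Re g = 0 on the closed unit ball
  have hre0 : ∀ z ∈ Metric.closedBall (0:ℂ) 1, (g z).re = 0 := by
    have haux : ∀ s : ℂ, (∀ w, ‖w‖ = 1 → (s * g w).re ≤ 0) →
        ∀ z ∈ Metric.closedBall (0:ℂ) 1, (s * g z).re ≤ 0 := by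
      intro s hs z hz
      have hdc : DiffContOnCl ℂ (fun w => Complex.exp (s * g w)) (Metric.ball (0:ℂ) 1) := by
        constructor
        · exact ((hgd.mono hball1r₂).const_mul s).cexp
        · refine ContinuousOn.mono (((hgd.const_mul s).cexp).continuousOn) ?_
          rw [closure_ball (0:ℂ) one_ne_zero]
          exact Metric.closedBall_subset_ball hr₂1
      have h1 : ‖Complex.exp (s * g z)‖ ≤ 1 := by
        apply Complex.norm_le_of_forall_mem_frontier_norm_le Metric.isBounded_ball hdc ?_ ?_
        · intro w hw
          rw [frontier_ball (0:ℂ) one_ne_zero] at hw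
          have hw1 : ‖w‖ = 1 := by
            exact mem_sphere_zero_iff_norm.1 hw
          rw [Complex.norm_exp]
          exact Real.exp_le_one_iff.2 (hs w hw1)
        · rw [closure_ball (0:ℂ) one_ne_zero]; exact hz
      rw [Complex.norm_exp] at h1
      exact Real.exp_le_one_iff.1 h1
    intro z hz
    have hp1 := haux 1 (fun w hw => by rw [one_mul]; exact (hgre_bdry w hw).le) z hz
    have hm1 := haux (-1) (fun w hw => by
      rw [neg_one_mul, Complex.neg_re, hgre_bdry w hw, neg_zero]) z hz
    rw [one_mul] at hp1
    rw [neg_one_mul, Complex.neg_re] at hm1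
    linarith
  -- the derivative of f vanishes on the unit ball (except possibly 0)
  have hdd0 : ∀ z ∈ Metric.ball (0:ℂ) 1, z * dd z = 0 := by
    intro z hz
    have hz₂ : z ∈ Metric.ball (0:ℂ) r₂ := hball1r₂ hz
    have hzU : z ∈ U := hballU hz₂
    have hg : HasDerivAt g ((1 * f z + z * dd z) - f z) z :=
      (((hasDerivAt_id z).mul (hfD z hzU)).sub (hF z hz₂)).sub_const _
    set m := (1 * f z + z * dd z) - f z with hmdef
    have hfd0 : fderiv ℝ (fun w => (g w).re) z = 0 := by
      have h2 : (fun w => (g w).re) =ᶠ[nhds z] (fun _ => (0:ℝ)) := by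
        filter_upwards [Metric.isOpen_ball.mem_nhds hz] with w hw
        exact hre0 w (Metric.ball_subset_closedBall hw)
      rw [h2.fderiv_eq]
      exact fderiv_const_apply 0
    have hre : HasFDerivAt (fun w => (g w).re)
        (Complex.reCLM.comp ((ContinuousLinearMap.smulRight (1:ℂ→L[ℂ]ℂ) m).restrictScalars ℝ)) z :=
      Complex.reCLM.hasFDerivAt.comp z (hg.hasFDerivAt.restrictScalars ℝ)
    have hCLM : Complex.reCLM.comp
        ((ContinuousLinearMap.smulRight (1:ℂ→L[ℂ]ℂ) m).restrictScalars ℝ) = 0 := by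
      rw [← hre.fderiv]; exact hfd0
    have e1 := ContinuousLinearMap.ext_iff.1 hCLM 1
    have e2 := ContinuousLinearMap.ext_iff.1 hCLM Complex.I
    simp only [ContinuousLinearMap.coe_comp', Function.comp_apply,
      ContinuousLinearMap.coe_restrictScalars', ContinuousLinearMap.smulRight_apply,
      ContinuousLinearMap.one_apply, smul_eq_mul, one_mul, Complex.reCLM_apply,
      ContinuousLinearMap.zero_apply] at e1 e2
    have hm : m = 0 := by
      apply Complex.ext
      · simpa using e1
      · simp only [Complex.mul_re, Complex.I_re, Complex.I_im, zero_mul, one_mul,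
          zero_sub, neg_eq_zero] at e2
        simpa using e2
    rw [hmdef] at hm
    linear_combination hm
  have hu0 : u 0 = 0 := by
    have h := hre0 0 (Metric.mem_closedBall_self zero_le_one)
    simp only [hgdef, zero_mul, hF0, zero_sub, sub_zero, Complex.neg_re,
      Complex.ofReal_re, neg_eq_zero] at h
    simpa using h
  -- deriv f vanishes on the whole unit ball
  have hderivf : ∀ z ∈ Metric.ball (0:ℂ) 1, deriv f z = 0 := by
    have h0mem : (0:ℂ) ∈ Metric.ball (0:ℂ) 1 := mem_ball_self one_pos
    have h0U : (0:ℂ) ∈ U := hball (Metric.mem_closedBall_self zero_le_one)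
    have hdd_eq : ∀ z ∈ Metric.ball (0:ℂ) 1, deriv f z = dd z := fun z hz =>
      (hfD z (hballU (hball1r₂ hz))).deriv
    have hzero : deriv f 0 = 0 := by
      have hcont : ContinuousAt (deriv f) 0 :=
        (((hfdiffU.analyticOnNhd hU).deriv).continuousOn).continuousAt (hU.mem_nhds h0U)
      have h1 : Filter.Tendsto (deriv f) (nhdsWithin (0:ℂ) {(0:ℂ)}ᶜ) (nhds (deriv f 0)) :=
        hcont.continuousWithinAt
      have h2 : (deriv f) =ᶠ[nhdsWithin (0:ℂ) {(0:ℂ)}ᶜ] (fun _ => (0:ℂ)) := by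
        filter_upwards [mem_nhdsWithin_of_mem_nhds (Metric.isOpen_ball.mem_nhds h0mem),
          self_mem_nhdsWithin] with w hw hw'
        have hzd := hdd0 w hw
        have hdw : dd w = 0 := by
          rcases mul_eq_zero.1 hzd with h | h
          · exact absurd h hw'
          · exact h
        rw [hdd_eq w hw, hdw]
      have h3 : Filter.Tendsto (deriv f) (nhdsWithin (0:ℂ) {(0:ℂ)}ᶜ) (nhds 0) := by
        rw [Filter.tendsto_congr' h2]
        exact tendsto_const_nhds
      exact tendsto_nhds_unique h1 h3
    intro z hz
    rcases eq_or_ne z 0 with rfl | hne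
    · exact hzero
    · have hzd := hdd0 z hz
      have hdz : dd z = 0 := by
        rcases mul_eq_zero.1 hzd with h | h
        · exact absurd h hne
        · exact h
      rw [hdd_eq z hz, hdz]
  -- f is constant on the unit ball
  have hfc : ∀ z ∈ Metric.ball (0:ℂ) 1, f z = f 0 := by
    intro z hz
    refine (convex_ball (0:ℂ) 1).is_const_of_fderivWithin_eq_zero
      (hfdiffU.mono (hball1r₂.trans hballU)) ?_ hz (mem_ball_self one_pos)
    intro w hw
    have h := hfD w (hballU (hball1r₂ hw))
    have hdw : dd w = 0 := by rw [← h.deriv]; exact hderivf w hw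
    rw [hdw] at h
    rw [fderivWithin_of_isOpen Metric.isOpen_ball hw, h.hasFDerivAt.fderiv]
    apply ContinuousLinearMap.ext
    intro v
    simp
  -- by analytic continuation, f is constant on the ball of radius r₂
  have hfcR : ∀ z ∈ Metric.ball (0:ℂ) r₂, f z = f 0 := by
    have hb : Metric.ball (0:ℂ) R ⊆ U := Metric.ball_subset_closedBall.trans hRU
    have h1 : AnalyticOnNhd ℂ f (Metric.ball (0:ℂ) R) :=
      (hfdiffU.mono hb).analyticOnNhd Metric.isOpen_ball
    have h2 : AnalyticOnNhd ℂ (fun _ => f 0) (Metric.ball (0:ℂ) R) := analyticOnNhd_const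
    have heq : Set.EqOn f (fun _ => f 0) (Metric.ball (0:ℂ) R) :=
      h1.eqOn_of_preconnected_of_eventuallyEq h2 (convex_ball (0:ℂ) R).isPreconnected
        (mem_ball_self (by linarith))
        (by filter_upwards [Metric.isOpen_ball.mem_nhds (mem_ball_self one_pos)] with w hw
            exact hfc w hw)
    intro z hz
    exact heq (Metric.ball_subset_ball hr₂R.le hz)
  -- F is linear on the ball of radius r₂
  have hFlin : ∀ z ∈ Metric.ball (0:ℂ) r₂, F z = f 0 * z := by
    intro z hz
    have hφ : DifferentiableOn ℂ (fun w => F w - f 0 * w) (Metric.ball (0:ℂ) r₂) := fun w hw =>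
      ((hF w hw).differentiableAt.sub (differentiableAt_id.const_mul (f 0))).differentiableWithinAt
    have hz0 : ∀ w ∈ Metric.ball (0:ℂ) r₂,
        fderivWithin ℂ (fun w => F w - f 0 * w) (Metric.ball (0:ℂ) r₂) w = 0 := by
      intro w hw
      have h0 := (hF w hw).sub ((hasDerivAt_id w).const_mul (f 0))
      have he : f w - f 0 * 1 = 0 := by rw [hfcR w hw]; ring
      rw [he] at h0
      have h : HasDerivAt (fun y : ℂ => F y - f 0 * y) 0 w := by simpa [id_eq, Pi.sub_def] using h0
      rw [fderivWithin_of_isOpen Metric.isOpen_ball hw, h.hasFDerivAt.fderiv]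
      apply ContinuousLinearMap.ext
      intro v
      simp
    have hc := (convex_ball (0:ℂ) r₂).is_const_of_fderivWithin_eq_zero hφ hz0 hz
      (mem_ball_self (by linarith))
    rw [hF0] at hc
    simp only [mul_zero, sub_zero, sub_self] at hc
    linear_combination hc
  -- conclusion
  refine ⟨(f 0).re, -(f 0).im, ?_⟩
  intro z hz
  have hzb : z ∈ Metric.ball (0:ℂ) r₂ :=
    mem_ball_zero_iff.2 (by linarith)
  rw [hmid z hzb, hFlin z hzb, hu0]
  simp only [Complex.mul_re, zero_add]
  ring
end

section
/- Let G(z) = 1 + Re( z · Log((1-z)/(1+z)) ). There exists a constant C > 0 such that for every τ > 0, every ϖ ∈ ℝ, and every z ∈ ℂ with |z| ≤ 1 and 0 < |z-1| ≤ 1/2, the function φ(z) := τ·G(z) + ϖ·Re(z) satisfies |φ(z) − τ·log(2|z-1|/τ) − τ·log(eτ/4) − ϖ| ≤ C·( τ·(1 + |log |z-1||) + |ϖ| )·|z-1|. (In other words, φ = τ log(2 d_p/τ) + 𝓜φ + O(d_p |log d_p|) near p = 1, where the mismatch is 𝓜φ = τ log(eτ/4) + ϖ and d_p = |z-1|.)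 -/
theorem LD_solution_mismatch_expansion :
    ∃ C : ℝ, 0 < C ∧ ∀ τ : ℝ, 0 < τ → ∀ ϖ : ℝ, ∀ z : ℂ,
      ‖z‖ ≤ 1 → 0 < ‖z - 1‖ → ‖z - 1‖ ≤ 1 / 2 →
      |τ * G z + ϖ * z.re - τ * Real.log (2 * ‖z - 1‖ / τ)
          - τ * Real.log (Real.exp 1 * τ / 4) - ϖ| ≤
        C * (τ * (1 + |Real.log (‖z - 1‖)|) + |ϖ|) * ‖z - 1‖ := by
  refine ⟨6, by norm_num, ?_⟩
  intro τ hτ ϖ z hz hd0 hd2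
  set d := ‖z - 1‖ with hdd
  set a := ‖1 + z‖ with haa
  set θ := ((1 - z) / (1 + z)).arg with hθdef
  -- basic bounds on a
  have ha_eq : a = ‖2 + (z - 1)‖ := by
    rw [haa]; ring_nf
  have ha_lb : 2 - d ≤ a := by
    have h := norm_sub_norm_le (2 : ℂ) (-(z - 1))
    simp only [norm_neg] at h
    have h2 : (2:ℂ) - (-(z-1)) = 1 + z + 1 - 1 := by ring
    have : ‖(2:ℂ) - (-(z - 1))‖ = a := by
      rw [haa]; congr 1; ring
    rw [this] at h
    simpa using h
  have ha_ub : a ≤ 2 + d := by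
    rw [ha_eq]
    have h := norm_add_le (2 : ℂ) (z - 1)
    simpa using h
  have ha_pos : (3:ℝ)/2 ≤ a := by linarith
  -- abs (1 - z) = d
  have hab : ‖1 - z‖ = d := by
    rw [hdd, show (1:ℂ) - z = -(z - 1) by ring, norm_neg]
  -- real/imag parts of the log
  have hre : (Complex.log ((1 - z) / (1 + z))).re = Real.log d - Real.log a := by
    rw [Complex.log_re, norm_div, hab, Real.log_div hd0.ne' (by linarith)]
  have him : (Complex.log ((1 - z) / (1 + z))).im = θ := Complex.log_im _
  -- log expansions
  have l1 : Real.log (2 * d / τ) = Real.log 2 + Real.log d - Real.log τ := by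
    rw [Real.log_div (by positivity) hτ.ne', Real.log_mul two_ne_zero hd0.ne']
  have l2 : Real.log (Real.exp 1 * τ / 4) = 1 + Real.log τ - (Real.log 2 + Real.log 2) := by
    rw [Real.log_div (by positivity) (by norm_num),
      Real.log_mul (Real.exp_ne_zero 1) hτ.ne', Real.log_exp,
      show (4:ℝ) = 2 * 2 by norm_num, Real.log_mul two_ne_zero two_ne_zero]
  -- the key algebraic identity
  have key : τ * G z + ϖ * z.re - τ * Real.log (2 * d / τ)
      - τ * Real.log (Real.exp 1 * τ / 4) - ϖ
      = τ * ((z.re - 1) * Real.log d - z.re * (Real.log a - Real.log 2)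
          - (z.re - 1) * Real.log 2 - z.im * θ) + ϖ * (z.re - 1) := by
    rw [l1, l2]
    simp only [G, Complex.mul_re, hre, him]
    ring
  -- component bounds
  have hzre : |z.re| ≤ 1 := (Complex.abs_re_le_norm z).trans hz
  have hre1 : |z.re - 1| ≤ d := by
    have := Complex.abs_re_le_norm (z - 1)
    simpa using this
  have him1 : |z.im| ≤ d := by
    have := Complex.abs_im_le_norm (z - 1)
    simpa using this
  have hθb : |θ| ≤ Real.pi := Complex.abs_arg_le_pi _
  -- |log a - log 2| ≤ d
  have hla : |Real.log a - Real.log 2| ≤ d := by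
    have e1 : Real.log a - Real.log 2 = Real.log (a / 2) := by
      rw [Real.log_div (by linarith) two_ne_zero]
    have hup : Real.log (a / 2) ≤ d := by
      have := Real.log_le_sub_one_of_pos (show (0:ℝ) < a / 2 by linarith)
      linarith
    have hlo : -d ≤ Real.log (a / 2) := by
      have h2a : (0:ℝ) < 2 / a := by positivity
      have h := Real.log_le_sub_one_of_pos h2a
      have hinv : Real.log (2 / a) = -Real.log (a / 2) := by
        rw [Real.log_div two_ne_zero (by linarith), Real.log_div (by linarith) two_ne_zero]
        ring
      rw [hinv] at h
      have : 2 / a - 1 ≤ d := by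
        rw [div_sub_one (by linarith : a ≠ 0)]
        rw [div_le_iff₀ (by linarith : (0:ℝ) < a)]
        have : d * (3/2) ≤ d * a := mul_le_mul_of_nonneg_left ha_pos hd0.le
        linarith
      linarith
    rw [e1]
    exact abs_le.mpr ⟨hlo, hup⟩
  -- bound the main error term
  have hE : |(z.re - 1) * Real.log d - z.re * (Real.log a - Real.log 2)
      - (z.re - 1) * Real.log 2 - z.im * θ|
      ≤ d * |Real.log d| + d + d * Real.log 2 + d * Real.pi := by
    have b1 : |(z.re - 1) * Real.log d| ≤ d * |Real.log d| := by
      rw [abs_mul]; exact mul_le_mul_of_nonneg_right hre1 (abs_nonneg _)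
    have b2 : |z.re * (Real.log a - Real.log 2)| ≤ d := by
      rw [abs_mul]
      calc |z.re| * |Real.log a - Real.log 2| ≤ 1 * d :=
        mul_le_mul hzre hla (abs_nonneg _) zero_le_one
      _ = d := one_mul d
    have b3 : |(z.re - 1) * Real.log 2| ≤ d * Real.log 2 := by
      rw [abs_mul, abs_of_nonneg (Real.log_nonneg (by norm_num))]
      exact mul_le_mul_of_nonneg_right hre1 (Real.log_nonneg (by norm_num))
    have b4 : |z.im * θ| ≤ d * Real.pi := by
      rw [abs_mul]
      exact mul_le_mul him1 hθb (abs_nonneg _) hd0.le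
    have t1 := abs_sub ((z.re - 1) * Real.log d) (z.re * (Real.log a - Real.log 2))
    have t2 := abs_sub ((z.re - 1) * Real.log d - z.re * (Real.log a - Real.log 2))
      ((z.re - 1) * Real.log 2)
    have t3 := abs_sub ((z.re - 1) * Real.log d - z.re * (Real.log a - Real.log 2)
      - (z.re - 1) * Real.log 2) (z.im * θ)
    linarith
  rw [key]
  have habs : |τ * ((z.re - 1) * Real.log d - z.re * (Real.log a - Real.log 2)
      - (z.re - 1) * Real.log 2 - z.im * θ) + ϖ * (z.re - 1)|
      ≤ τ * (d * |Real.log d| + d + d * Real.log 2 + d * Real.pi) + |ϖ| * d := by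
    calc _ ≤ |τ * ((z.re - 1) * Real.log d - z.re * (Real.log a - Real.log 2)
        - (z.re - 1) * Real.log 2 - z.im * θ)| + |ϖ * (z.re - 1)| := abs_add_le _ _
    _ ≤ τ * (d * |Real.log d| + d + d * Real.log 2 + d * Real.pi) + |ϖ| * d := by
        rw [abs_mul, abs_mul, abs_of_pos hτ]
        exact add_le_add (mul_le_mul_of_nonneg_left hE hτ.le)
          (mul_le_mul_of_nonneg_left hre1 (abs_nonneg _))
  refine habs.trans ?_
  have hπ : Real.pi ≤ 3.15 := by
    have := Real.pi_lt_d2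
    linarith
  have hlog2 : Real.log 2 ≤ 1 := by
    have := Real.log_le_sub_one_of_pos (show (0:ℝ) < 2 by norm_num)
    linarith
  have hL : (0:ℝ) ≤ |Real.log d| := abs_nonneg _
  have hϖ : (0:ℝ) ≤ |ϖ| := abs_nonneg _
  have hfin : |Real.log d| + 1 + Real.log 2 + Real.pi ≤ 6 * (1 + |Real.log d|) := by
    linarith
  calc τ * (d * |Real.log d| + d + d * Real.log 2 + d * Real.pi) + |ϖ| * d
      = τ * d * (|Real.log d| + 1 + Real.log 2 + Real.pi) + |ϖ| * d := by ring
    _ ≤ τ * d * (6 * (1 + |Real.log d|)) + |ϖ| * d * 6 := by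
        have h1 : τ * d * (|Real.log d| + 1 + Real.log 2 + Real.pi)
            ≤ τ * d * (6 * (1 + |Real.log d|)) :=
          mul_le_mul_of_nonneg_left hfin (by positivity)
        have h2 : (0:ℝ) ≤ |ϖ| * d := mul_nonneg hϖ hd0.le
        linarith
    _ = 6 * (τ * (1 + |Real.log d|) + |ϖ|) * d := by ring
end

section
/- For ϖ ∈ (0, 1) define τ̲ = τ̲(ϖ) := exp( log((4/e)·|log ϖ|) / log ϖ ) · ϖ / |log ϖ| (note log ϖ < 0 and |log ϖ| = −log ϖ). Then ( τ̲·log τ̲ + ϖ + τ̲·log(e/4) ) / τ̲ tends to 0 as ϖ → 0⁺. -/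
noncomputable def tauLower (ϖ : ℝ) : ℝ :=
  Real.exp (Real.log ((4 / Real.exp 1) * |Real.log ϖ|) / Real.log ϖ) * ϖ / |Real.log ϖ|

open Real Filter

noncomputable def tauF (L : ℝ) : ℝ :=
  -(Real.log ((4 / Real.exp 1) * L) / L) +
    L * (Real.exp (Real.log ((4 / Real.exp 1) * L) / L) - 1 -
      Real.log ((4 / Real.exp 1) * L) / L)

lemma hc_pos : (0:ℝ) < 4 / Real.exp 1 := by positivity

lemma tendsto_logc_pow_div (n : ℕ) :
    Tendsto (fun L : ℝ => Real.log ((4 / Real.exp 1) * L) ^ n / L) atTop (nhds 0) := by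
  have hc := hc_pos
  have h1 : Tendsto (fun u : ℝ => Real.log u ^ n / ((4 / Real.exp 1)⁻¹ * u + 0)) atTop
      (nhds 0) := Real.tendsto_pow_log_div_mul_add_atTop _ 0 n (by positivity)
  have h2 : Tendsto (fun L : ℝ => (4 / Real.exp 1) * L) atTop atTop :=
    Tendsto.const_mul_atTop hc tendsto_id
  have h3 := h1.comp h2
  refine h3.congr' ?_
  filter_upwards [eventually_ne_atTop (0:ℝ)] with L hL
  simp only [Function.comp_apply]
  congr 1
  field_simp
  ring

lemma tendsto_tauF : Tendsto tauF atTop (nhds 0) := by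
  have hx : Tendsto (fun L : ℝ => Real.log ((4 / Real.exp 1) * L) / L) atTop (nhds 0) := by
    have := tendsto_logc_pow_div 1
    simpa using this
  have hx2 := tendsto_logc_pow_div 2
  have hsq : Tendsto (fun L : ℝ =>
      L * (Real.exp (Real.log ((4 / Real.exp 1) * L) / L) - 1 -
        Real.log ((4 / Real.exp 1) * L) / L)) atTop (nhds 0) := by
    apply squeeze_zero_norm' _ hx2
    have hball : ∀ᶠ L in atTop, |Real.log ((4 / Real.exp 1) * L) / L| ≤ 1 := by
      have := hx.eventually (Metric.closedBall_mem_nhds (0:ℝ) one_pos)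
      filter_upwards [this] with L hL
      simpa [Real.dist_eq, abs_div] using hL
    filter_upwards [hball, eventually_gt_atTop (0:ℝ)] with L hL hLpos
    set x := Real.log ((4 / Real.exp 1) * L) / L with hxdef
    have hb := Real.abs_exp_sub_one_sub_id_le hL
    have : ‖L * (Real.exp x - 1 - x)‖ ≤ L * x ^ 2 := by
      rw [norm_mul, Real.norm_eq_abs, Real.norm_eq_abs, abs_of_pos hLpos]
      exact mul_le_mul_of_nonneg_left hb hLpos.le
    refine this.trans (le_of_eq ?_)
    rw [hxdef]
    field_simp
  have := (hx.neg).add hsq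
  simp at this
  exact this

theorem tauLower_mismatch_little_o :
    Filter.Tendsto
      (fun ϖ : ℝ =>
        (tauLower ϖ * Real.log (tauLower ϖ) + ϖ + tauLower ϖ * Real.log (Real.exp 1 / 4))
          / tauLower ϖ)
      (nhdsWithin 0 (Set.Ioi 0)) (nhds 0) := by
  have hneg : Tendsto (fun ϖ : ℝ => -Real.log ϖ) (nhdsWithin 0 (Set.Ioi 0)) atTop :=
    tendsto_neg_atBot_atTop.comp Real.tendsto_log_nhdsGT_zero
  have hcomp : Tendsto (fun ϖ : ℝ => tauF (-Real.log ϖ)) (nhdsWithin 0 (Set.Ioi 0)) (nhds 0) :=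
    tendsto_tauF.comp hneg
  refine hcomp.congr' ?_
  have hmem : Set.Ioo (0:ℝ) 1 ∈ nhdsWithin (0:ℝ) (Set.Ioi 0) :=
    Ioo_mem_nhdsGT_of_mem ⟨le_refl 0, one_pos⟩
  filter_upwards [hmem] with ϖ hϖ
  obtain ⟨hϖ0, hϖ1⟩ := hϖ
  have hl : Real.log ϖ < 0 := Real.log_neg hϖ0 hϖ1
  set L : ℝ := -Real.log ϖ with hLdef
  have hL : 0 < L := by simpa [hLdef] using neg_pos.mpr hl
  have habs : |Real.log ϖ| = L := abs_of_neg hl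
  set c : ℝ := 4 / Real.exp 1 with hcdef
  have hc : 0 < c := hc_pos
  set A : ℝ := Real.log (c * L) with hAdef
  have hτ : tauLower ϖ = Real.exp (A / Real.log ϖ) * ϖ / L := by
    rw [tauLower, habs]
  have hτpos : 0 < tauLower ϖ := by
    rw [hτ]; positivity
  have hlogτ : Real.log (tauLower ϖ) = A / Real.log ϖ + Real.log ϖ - Real.log L := by
    rw [hτ, Real.log_div (by positivity) hL.ne', Real.log_mul (Real.exp_ne_zero _) hϖ0.ne',
      Real.log_exp]
  have hA : A = Real.log c + Real.log L := Real.log_mul hc.ne' hL.ne'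
  have hloge4 : Real.log (Real.exp 1 / 4) = -Real.log c := by
    rw [hcdef, Real.log_div (Real.exp_ne_zero _) (by norm_num),
      Real.log_div (by norm_num) (Real.exp_ne_zero _)]
    ring
  have hdivneg : A / Real.log ϖ = -(A / L) := by
    rw [hLdef, div_neg, neg_neg]
  have hϖτ : ϖ / tauLower ϖ = L * Real.exp (A / L) := by
    rw [hτ, hdivneg, Real.exp_neg]
    field_simp
  have hstep : (tauLower ϖ * Real.log (tauLower ϖ) + ϖ + tauLower ϖ * Real.log (Real.exp 1 / 4))
      / tauLower ϖ = Real.log (tauLower ϖ) + Real.log (Real.exp 1 / 4) + ϖ / tauLower ϖ := by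
    field_simp
    ring
  rw [hstep, hlogτ, hloge4, hϖτ, hdivneg]
  show tauF L = _
  rw [tauF, ← hcdef, ← hAdef]
  have hlogL : Real.log L = A - Real.log c := by rw [hA]; ring
  have hlogϖ : Real.log ϖ = -L := by rw [hLdef, neg_neg]
  rw [hlogL, hlogϖ]
  field_simp
  ring
end

section
/- There exists ϖ₀ ∈ (0, 1) such that for every ϖ ∈ (0, ϖ₀] and every ζ ∈ [−τ̲, τ̲], where τ̲ = τ̲(ϖ) := exp( log((4/e)·|log ϖ|) / log ϖ ) · ϖ / |log ϖ|, the number τ := e^{ζ/ϖ} · τ̲ satisfies | τ·log(eτ/4) + ϖ + ζ | ≤ τ̲ / 2. (Prescribed mismatch: the LD solution φ⟦ζ; ϖ⟧ with strength τ[ζ,ϖ] = e^{ζ/ϖ} τ̲ and mismatch 𝓜φ = τ log(eτ/4) + ϖ satisfies |𝓜φ + ζ| ≤ τ̲/2.) -/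
set_option maxHeartbeats 1000000 in
theorem prescribed_mismatch :
    ∃ ϖ₀ ∈ Set.Ioo (0 : ℝ) 1, ∀ ϖ ∈ Set.Ioc (0 : ℝ) ϖ₀,
      ∀ ζ ∈ Set.Icc (-(tauLower ϖ)) (tauLower ϖ),
        |Real.exp (ζ / ϖ) * tauLower ϖ *
            Real.log (Real.exp 1 * (Real.exp (ζ / ϖ) * tauLower ϖ) / 4) + ϖ + ζ| ≤
          tauLower ϖ / 2 := by
  have he9 : Real.exp 1 < 2.7182818286 := Real.exp_one_lt_d9
  have he9' : 2.7182818283 < Real.exp 1 := Real.exp_one_gt_d9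
  refine ⟨Real.exp (-(10 ^ 8 : ℝ)), ⟨Real.exp_pos _, ?_⟩, ?_⟩
  · rw [Real.exp_lt_one_iff]; norm_num
  rintro ϖ ⟨hϖ0, hϖ1⟩ ζ ⟨hζl, hζr⟩
  set L : ℝ := -Real.log ϖ with hLdef
  have hlogϖ : Real.log ϖ ≤ -(10 ^ 8 : ℝ) := by
    have h := Real.log_le_log hϖ0 hϖ1
    rwa [Real.log_exp] at h
  have hL8 : (10 ^ 8 : ℝ) ≤ L := by rw [hLdef]; linarith
  have hLpos : 0 < L := by norm_num at hL8 ⊢; linarith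
  have hLne : L ≠ 0 := ne_of_gt hLpos
  have habs : |Real.log ϖ| = L := by
    rw [abs_of_neg (by rw [hLdef] at hLpos; linarith)]
  have hlogeq : Real.log ϖ = -L := by rw [hLdef]; ring
  set s : ℝ := ζ / ϖ with hsdef
  set a : ℝ := Real.log ((4 / Real.exp 1) * L) / Real.log ϖ with hadef
  have htau : tauLower ϖ = Real.exp a * ϖ / L := by
    rw [tauLower, habs]
  set M : ℝ := Real.log L with hMdef
  -- basic log facts
  have hM1 : 1 ≤ M := by
    rw [hMdef, Real.le_log_iff_exp_le hLpos]
    calc Real.exp 1 ≤ 2.7182818286 := le_of_lt he9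
    _ ≤ L := by norm_num at hL8 ⊢; linarith
  have hlog4 : Real.log 4 = Real.log ((4 : ℝ)) := rfl
  have hlog4lb : 1 ≤ Real.log 4 := by
    rw [Real.le_log_iff_exp_le (by norm_num : (0:ℝ) < 4)]
    simpa using le_of_lt (lt_trans he9 (by norm_num))
  have hlog4ub : Real.log 4 ≤ 2 := by
    rw [Real.log_le_iff_le_exp (by norm_num : (0:ℝ) < 4)]
    have : (2 : ℝ) = 1 + 1 := by norm_num
    rw [this, Real.exp_add]
    nlinarith [Real.exp_pos (1:ℝ)]
  set c : ℝ := Real.log 4 - 1 with hcdef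
  have hc0 : 0 ≤ c := by rw [hcdef]; linarith
  have hc1 : c ≤ 1 := by rw [hcdef]; linarith
  -- a = -((c + M)/L)
  have haval : a = -((c + M) / L) := by
    rw [hadef, hlogeq, Real.log_mul (by positivity) hLne,
      Real.log_div (by norm_num) (Real.exp_ne_zero 1), Real.log_exp, div_neg, hcdef, hMdef]
  have ha_nonpos : a ≤ 0 := by
    rw [haval]
    have : 0 ≤ (c + M) / L := by positivity
    linarith
  have ha_abs : |a| ≤ 2 * M / L := by
    rw [haval, abs_neg, abs_of_nonneg (by positivity)]
    gcongr
    linarith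
  -- the key size fact : 120 * M^2 ≤ L
  have hsqL : Real.sqrt L ^ 2 = L := Real.sq_sqrt (le_of_lt hLpos)
  have hsqLge : (10 ^ 4 : ℝ) ≤ Real.sqrt L := by
    rw [show (10^4 : ℝ) = Real.sqrt ((10^4)^2) by rw [Real.sqrt_sq (by norm_num)]]
    apply Real.sqrt_le_sqrt
    norm_num at hL8 ⊢; linarith
  set Q : ℝ := Real.sqrt (Real.sqrt L) with hQdef
  have hQ0 : 0 ≤ Q := Real.sqrt_nonneg _
  have hQsq : Q ^ 2 = Real.sqrt L := Real.sq_sqrt (Real.sqrt_nonneg _)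
  have hQpos : 0 < Q := by
    rw [hQdef]
    apply Real.sqrt_pos.mpr
    apply Real.sqrt_pos.mpr hLpos
  have hMQ : M ≤ 4 * Q := by
    have h1 : Real.log (Real.sqrt L) = M / 2 := by
      rw [Real.log_sqrt (le_of_lt hLpos), hMdef]
    have h2 : Real.log Q = M / 4 := by
      rw [hQdef, Real.log_sqrt (Real.sqrt_nonneg _), h1]; ring
    have h3 : Real.log Q ≤ Q - 1 := Real.log_le_sub_one_of_pos hQpos
    rw [h2] at h3; linarith
  have hkey : 120 * M ^ 2 ≤ L := by
    nlinarith [sq_nonneg (M - 4 * Q), hQsq, hsqL, hsqLge, hM1, hQ0]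
  -- bounds on s and u
  have hτpos : 0 < tauLower ϖ := by
    rw [htau]; positivity
  have hζabs : |ζ| ≤ Real.exp a * ϖ / L := by
    rw [← htau]; exact abs_le.mpr ⟨hζl, hζr⟩
  have hea1 : Real.exp a ≤ 1 := Real.exp_le_one_iff.mpr ha_nonpos
  have hs_abs : |s| ≤ 1 / L := by
    rw [hsdef, abs_div, abs_of_pos hϖ0, div_le_div_iff₀ hϖ0 hLpos]
    have h3 : Real.exp a * ϖ / L * L = Real.exp a * ϖ := by field_simp
    have h4 := mul_le_mul_of_nonneg_right hζabs hLpos.le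
    rw [h3] at h4
    have h5 : Real.exp a * ϖ ≤ ϖ := by nlinarith
    linarith
  set u : ℝ := s + a with hudef
  have hu_abs : |u| ≤ 3 * M / L := by
    calc |u| ≤ |s| + |a| := abs_add_le s a
    _ ≤ 1 / L + 2 * M / L := add_le_add hs_abs ha_abs
    _ = (1 + 2 * M) / L := by ring
    _ ≤ 3 * M / L := by
        gcongr
        linarith
  have hu_small : |u| ≤ 1 := by
    calc |u| ≤ 3 * M / L := hu_abs
    _ ≤ 1 := by
        rw [div_le_one hLpos]; linarith only [hkey, hM1, sq_nonneg (M - 1)]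
  -- exp estimates
  have hE1 : |Real.exp u - 1 - u| ≤ u ^ 2 := Real.abs_exp_sub_one_sub_id_le hu_small
  have hE1' : |Real.exp u - 1| ≤ 2 * |u| := Real.abs_exp_sub_one_le hu_small
  have heu3 : Real.exp u ≤ 3 := by
    calc Real.exp u ≤ Real.exp 1 := Real.exp_le_exp.mpr (le_trans (le_abs_self u) hu_small)
    _ ≤ 3 := by linarith
  have hea_half : (1:ℝ) / 2 ≤ Real.exp a := by
    have h1 : a + 1 ≤ Real.exp a := Real.add_one_le_exp a
    have h2 : -(2 * M / L) ≤ a := by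
      have := neg_abs_le a
      linarith [ha_abs]
    have h3 : 2 * M / L ≤ 1 / 2 := by
      rw [div_le_div_iff₀ hLpos (by norm_num : (0:ℝ) < 2)]
      linarith only [hkey, hM1, sq_nonneg (M - 1)]
    linarith
  -- the identity
  have hζeq : ζ = s * ϖ := by rw [hsdef]; field_simp
  have hlog_inner : Real.log (Real.exp 1 * (Real.exp s * tauLower ϖ) / 4)
      = u + L * (a - 1) := by
    have hrw : Real.exp 1 * (Real.exp s * tauLower ϖ) / 4
        = Real.exp (1 + s + a) * ϖ / (4 * L) := by
      rw [htau, Real.exp_add, Real.exp_add]; field_simp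
    rw [hrw, Real.log_div (by positivity) (by positivity),
      Real.log_mul (Real.exp_ne_zero _) (ne_of_gt hϖ0),
      Real.log_mul (by norm_num) hLne, Real.log_exp, hlogeq, ← hMdef]
    have h4 : Real.log 4 = 1 + c := by rw [hcdef]; ring
    have haL : a * L = -(c + M) := by
      rw [haval]; field_simp
    rw [hudef]
    linarith only [haL, h4]
  set E1 : ℝ := Real.exp u - 1 - u with hE1def
  set E2 : ℝ := a * (Real.exp u - 1) with hE2def
  set E3 : ℝ := Real.exp u * u / L with hE3def
  have hident : Real.exp s * tauLower ϖ *
      Real.log (Real.exp 1 * (Real.exp s * tauLower ϖ) / 4) + ϖ + ζ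
      = ϖ * (E2 + E3 - E1) := by
    rw [hlog_inner, htau, hζeq, hE2def, hE3def, hE1def,
      show Real.exp u = Real.exp s * Real.exp a by rw [← Real.exp_add, hudef, add_comm],
      hudef]
    field_simp
    ring
  -- final estimate
  have hEsum : |E2 + E3 - E1| ≤ Real.exp a / (2 * L) := by
    have h1 : |E1| ≤ 9 * M ^ 2 / L ^ 2 := by
      calc |E1| ≤ u ^ 2 := hE1
      _ = |u| ^ 2 := (sq_abs u).symm
      _ ≤ (3 * M / L) ^ 2 := by
          apply pow_le_pow_left₀ (abs_nonneg u) hu_abs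
      _ = 9 * M ^ 2 / L ^ 2 := by rw [div_pow]; ring_nf
    have h2 : |E2| ≤ 12 * M ^ 2 / L ^ 2 := by
      calc |E2| = |a| * |Real.exp u - 1| := by rw [hE2def, abs_mul]
      _ ≤ (2 * M / L) * (2 * (3 * M / L)) := by
          apply mul_le_mul ha_abs ?_ (abs_nonneg _) (by positivity)
          calc |Real.exp u - 1| ≤ 2 * |u| := hE1'
          _ ≤ 2 * (3 * M / L) := by linarith [hu_abs]
      _ = 12 * M ^ 2 / L ^ 2 := by field_simp; ring
    have h3 : |E3| ≤ 9 * M ^ 2 / L ^ 2 := by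
      have : |E3| = Real.exp u * |u| / L := by
        rw [hE3def, abs_div, abs_mul, abs_of_pos (Real.exp_pos u), abs_of_pos hLpos]
      rw [this]
      calc Real.exp u * |u| / L ≤ 3 * (3 * M / L) / L := by
            gcongr
      _ = 9 * M / L ^ 2 := by field_simp; ring
      _ ≤ 9 * M ^ 2 / L ^ 2 := by
            gcongr <;> linarith only [hM1, sq_nonneg (M - 1)]
    have hsum : |E2 + E3 - E1| ≤ 30 * M ^ 2 / L ^ 2 := by
      calc |E2 + E3 - E1| ≤ |E2| + |E3| + |E1| := by
            calc |E2 + E3 - E1| = |E2 + E3 + -E1| := by rw [sub_eq_add_neg]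
            _ ≤ |E2 + E3| + |-E1| := abs_add_le _ _
            _ ≤ |E2| + |E3| + |E1| := by rw [abs_neg]; linarith [abs_add_le E2 E3]
      _ ≤ 30 * M ^ 2 / L ^ 2 := by
            rw [show (30:ℝ) * M^2 / L^2 = 12 * M^2/L^2 + 9*M^2/L^2 + 9*M^2/L^2 by ring]
            exact add_le_add (add_le_add h2 h3) h1
    calc |E2 + E3 - E1| ≤ 30 * M ^ 2 / L ^ 2 := hsum
    _ ≤ 1 / (4 * L) := by
        rw [div_le_div_iff₀ (by positivity) (by positivity)]
        have hh := mul_le_mul_of_nonneg_left hkey hLpos.le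
        linarith only [hh]
    _ = (1 / 2) / (2 * L) := by ring
    _ ≤ Real.exp a / (2 * L) := by gcongr
  rw [hident, abs_mul, abs_of_pos hϖ0, htau]
  calc ϖ * |E2 + E3 - E1| ≤ ϖ * (Real.exp a / (2 * L)) :=
        mul_le_mul_of_nonneg_left hEsum (le_of_lt hϖ0)
  _ = Real.exp a * ϖ / L / 2 := by field_simp
end

section
/- For τ > 0 and (t, ϑ) ∈ ℝ², define κ̂(t, ϑ) := (1 − τ·cosh t·cos ϑ, τ·cosh t·sin ϑ, τ·t) ∈ ℝ³ and λ(t) := 1 − (2/π)·arcsin( τ·(cosh² t + t²) / (2·cosh t) ). Suppose τ·(cosh² t + t²) ≤ 2·cosh t. Then the point κ̂(t, λ(t)·(π/2)) lies on the unit sphere: ‖κ̂(t, λ(t)·(π/2))‖² = 1. (The reparametrized half-catenoidal bridge κ̊(t, ϑ) = κ̂(t, λ(t)·ϑ) sends the lines |ϑ| = π/2 to the boundary sphere 𝕊² = ∂𝔹³.) -/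
noncomputable def khat (τ t ϑ : ℝ) : EuclideanSpace ℝ (Fin 3) :=
  WithLp.toLp 2 ![1 - τ * Real.cosh t * Real.cos ϑ, τ * Real.cosh t * Real.sin ϑ, τ * t]

noncomputable def lam (τ t : ℝ) : ℝ :=
  1 - (2 / Real.pi) * Real.arcsin (τ * (Real.cosh t ^ 2 + t ^ 2) / (2 * Real.cosh t))

theorem bridge_boundary_on_sphere (τ t : ℝ) (hτ : 0 < τ)
    (h : τ * (Real.cosh t ^ 2 + t ^ 2) ≤ 2 * Real.cosh t) :
    ‖khat τ t (lam τ t * (Real.pi / 2))‖ ^ 2 = 1 := by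
  set c := Real.cosh t with hc
  have hcpos : 0 < c := Real.cosh_pos t
  set x : ℝ := τ * (c ^ 2 + t ^ 2) / (2 * c) with hx
  have hx0 : 0 ≤ x := by
    apply div_nonneg
    · positivity
    · positivity
  have hx1 : x ≤ 1 := by
    rw [hx, div_le_one (by positivity)]
    exact h
  have hθ : lam τ t * (Real.pi / 2) = Real.pi / 2 - Real.arcsin x := by
    have hπ : Real.pi ≠ 0 := Real.pi_ne_zero
    rw [lam]
    field_simp
    rfl
  have hcos : Real.cos (lam τ t * (Real.pi / 2)) = x := by
    rw [hθ, Real.cos_pi_div_two_sub, Real.sin_arcsin (by linarith) hx1]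
  have hsin : Real.sin (lam τ t * (Real.pi / 2)) = Real.sqrt (1 - x ^ 2) := by
    rw [hθ, Real.sin_pi_div_two_sub, Real.cos_arcsin]
  have hnorm : ‖khat τ t (lam τ t * (Real.pi / 2))‖ ^ 2 =
      (1 - τ * c * x) ^ 2 + (τ * c) ^ 2 * (1 - x ^ 2) + (τ * t) ^ 2 := by
    rw [khat, EuclideanSpace.norm_eq, Real.sq_sqrt (by positivity)]
    simp [Fin.sum_univ_three, hcos, hsin]
    rw [mul_pow, Real.sq_sqrt (by nlinarith : (0:ℝ) ≤ 1 - x ^ 2)]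
  rw [hnorm]
  have hkey : x * (2 * c) = τ * (c ^ 2 + t ^ 2) := by
    rw [hx, div_mul_cancel₀]
    positivity
  nlinarith [hkey]
end

section
/- For τ > 0 and t ∈ ℝ with τ·(cosh² t + t²) ≤ 2·cosh t, let κ̂(t, ϑ) := (1 − τ·cosh t·cos ϑ, τ·cosh t·sin ϑ, τ·t), ν(t, ϑ) := (sech t·cos ϑ, −sech t·sin ϑ, tanh t), λ(t) := 1 − (2/π)·arcsin( τ·(cosh² t + t²)/(2·cosh t) ), and θ := λ(t)·(π/2). Then ⟨ κ̂(t, θ), ν(t, θ) ⟩ = (1/2)·τ·t²·sech² t − (1/2)·τ + τ·t·tanh t. (This is the formula for the boundary angle function κ̊*Θ̊ of the catenoidal bridge along 𝕊².) -/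
open scoped RealInnerProductSpace

noncomputable def nu (t ϑ : ℝ) : EuclideanSpace ℝ (Fin 3) :=
  WithLp.toLp 2 ![(Real.cosh t)⁻¹ * Real.cos ϑ, -((Real.cosh t)⁻¹ * Real.sin ϑ), Real.tanh t]

theorem boundary_angle_formula (τ t : ℝ) (hτ : 0 < τ)
    (h : τ * (Real.cosh t ^ 2 + t ^ 2) ≤ 2 * Real.cosh t) :
    ⟪khat τ t (lam τ t * (Real.pi / 2)), nu t (lam τ t * (Real.pi / 2))⟫ =
      (1 / 2) * τ * t ^ 2 * ((Real.cosh t)⁻¹) ^ 2 - (1 / 2) * τ +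
        τ * t * Real.tanh t := by
  have hc : 0 < Real.cosh t := Real.cosh_pos t
  set x := τ * (Real.cosh t ^ 2 + t ^ 2) / (2 * Real.cosh t) with hx
  have hx1 : x ≤ 1 := by
    rw [hx, div_le_one (by positivity)]
    exact h
  have hx0 : 0 ≤ x := by
    have : 0 ≤ Real.cosh t ^ 2 + t ^ 2 := by positivity
    positivity
  have hθ : lam τ t * (Real.pi / 2) = Real.pi / 2 - Real.arcsin x := by
    rw [lam]
    field_simp
    rw [← hx]
  have hcos : Real.cos (lam τ t * (Real.pi / 2)) = x := by
    rw [hθ, Real.cos_pi_div_two_sub, Real.sin_arcsin (by linarith) hx1]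
  set θ := lam τ t * (Real.pi / 2)
  have hsum : ⟪khat τ t θ, nu t θ⟫ =
      (1 - τ * Real.cosh t * Real.cos θ) * ((Real.cosh t)⁻¹ * Real.cos θ) +
        τ * Real.cosh t * Real.sin θ * (-((Real.cosh t)⁻¹ * Real.sin θ)) +
        τ * t * Real.tanh t := by
    simp [khat, nu, PiLp.inner_apply, Fin.sum_univ_three, RCLike.inner_apply]
    ring
  rw [hsum, hcos]
  have hs : Real.sin θ ^ 2 = 1 - x ^ 2 := by
    have := Real.sin_sq_add_cos_sq θ
    rw [hcos] at this; linarith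
  have hcc : Real.cosh t * (Real.cosh t)⁻¹ = 1 := mul_inv_cancel₀ hc.ne'
  have expand : (1 - τ * Real.cosh t * x) * ((Real.cosh t)⁻¹ * x) +
      τ * Real.cosh t * Real.sin θ * (-((Real.cosh t)⁻¹ * Real.sin θ)) +
      τ * t * Real.tanh t =
      (Real.cosh t)⁻¹ * x - τ * (Real.cosh t * (Real.cosh t)⁻¹) * (x ^ 2 + Real.sin θ ^ 2) +
        τ * t * Real.tanh t := by ring
  rw [expand, hcc, hs]
  have hxval : (Real.cosh t)⁻¹ * x =
      (1 / 2) * τ * t ^ 2 * ((Real.cosh t)⁻¹) ^ 2 + (1 / 2) * τ := by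
    rw [hx]
    field_simp
    ring
  rw [hxval]
  ring
end
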